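/- Let n ≥ 1, let f : ℝⁿ × [0,1] → ℝⁿ be continuous, let θ₀ ∈ ℝⁿ, and for each k ∈ ℕ let f_k : [0,1] → ℝⁿ be continuous and x_k : [0,1] → ℝⁿ be given by x_k(t) = θ₀ + ∫_0^t f_k(s) ds. Set b_k(t) = f(x_k(t), t) − f_k(t). Suppose that (i) x_k converges uniformly on [0,1] to a function x : [0,1] → ℝⁿ, (ii) b_k(t) → 0 as k → ∞ for almost every t ∈ [0,1], and (iii) there is a constant M such that ‖b_k(t)‖ ≤ M for all k and all t ∈ [0,1]. Then x(t) = θ₀ + ∫_0^t f(x(s), s) ds for every t ∈ [0,1]; in particular, x is differentiable on (0,1) with x'(t) = f(x(t), t) for all t ∈ (0,1). -/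

import Mathlib

set_option maxHeartbeats 4000000


open MeasureTheory Filter intervalIntegral


private lemma aux_dct {n : ℕ} (F : ℕ → ℝ → EuclideanSpace ℝ (Fin n))
    (G : ℝ → EuclideanSpace ℝ (Fin n)) (t C : ℝ)
    (hm : ∀ᶠ k in Filter.atTop,
      MeasureTheory.AEStronglyMeasurable (F k)
        (MeasureTheory.volume.restrict (Set.uIoc 0 t)))
    (hb : ∀ᶠ k in Filter.atTop, ∀ s ∈ Set.uIoc (0:ℝ) t, ‖F k s‖ ≤ C)
    (hl : ∀ᵐ s ∂(MeasureTheory.volume : MeasureTheory.Measure ℝ),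
      s ∈ Set.uIoc (0:ℝ) t → Filter.Tendsto (fun k => F k s) Filter.atTop (nhds (G s))) :
    Filter.Tendsto (fun k => ∫ s in (0:ℝ)..t, F k s) Filter.atTop
      (nhds (∫ s in (0:ℝ)..t, G s)) :=
  intervalIntegral.tendsto_integral_filter_of_dominated_convergence (fun _ => C)
    hm (hb.mono fun k hk => Filter.Eventually.of_forall hk)
    intervalIntegrable_const hl

theorem limit_of_approximate_solutions_solves_ode
    (n : ℕ) (hn : 1 ≤ n)
    (f : EuclideanSpace ℝ (Fin n) → ℝ → EuclideanSpace ℝ (Fin n))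
    (hf : ContinuousOn (fun p : EuclideanSpace ℝ (Fin n) × ℝ => f p.1 p.2)
      (Set.univ ×ˢ Set.Icc (0 : ℝ) 1))
    (θ₀ : EuclideanSpace ℝ (Fin n))
    (fk : ℕ → ℝ → EuclideanSpace ℝ (Fin n))
    (hfk : ∀ k : ℕ, ContinuousOn (fk k) (Set.Icc (0 : ℝ) 1))
    (xk : ℕ → ℝ → EuclideanSpace ℝ (Fin n))
    (hxk : ∀ k : ℕ, ∀ t ∈ Set.Icc (0 : ℝ) 1,
      xk k t = θ₀ + ∫ s in (0 : ℝ)..t, fk k s)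
    (b : ℕ → ℝ → EuclideanSpace ℝ (Fin n))
    (hb : ∀ k : ℕ, ∀ t ∈ Set.Icc (0 : ℝ) 1, b k t = f (xk k t) t - fk k t)
    (x : ℝ → EuclideanSpace ℝ (Fin n))
    -- (i) uniform convergence of the approximate solutions on [0,1]
    (hconv : TendstoUniformlyOn (fun k => xk k) x atTop (Set.Icc (0 : ℝ) 1))
    -- (ii) the residuals tend to 0 for almost every t ∈ [0,1]
    (hres : ∀ᵐ t ∂(volume.restrict (Set.Icc (0 : ℝ) 1)),
      Tendsto (fun k => b k t) atTop (nhds 0))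
    -- (iii) uniform bound on the residuals
    (M : ℝ) (hbd : ∀ k : ℕ, ∀ t ∈ Set.Icc (0 : ℝ) 1, ‖b k t‖ ≤ M) :
    (∀ t ∈ Set.Icc (0 : ℝ) 1, x t = θ₀ + ∫ s in (0 : ℝ)..t, f (x s) s) ∧
      ∀ t ∈ Set.Ioo (0 : ℝ) 1, HasDerivAt x (f (x t) t) t := by
  set I : Set ℝ := Set.Icc (0 : ℝ) 1 with hI
  -- continuity of the approximate solutions
  have hxkc : ∀ k, ContinuousOn (xk k) I := by
    intro k
    have hint : IntegrableOn (fk k) (Set.uIcc (0 : ℝ) 1) := by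
      rw [Set.uIcc_of_le (by norm_num : (0:ℝ) ≤ 1)]
      exact (hfk k).integrableOn_compact isCompact_Icc
    have hprim := intervalIntegral.continuousOn_primitive_interval
      (μ := volume) hint
    rw [Set.uIcc_of_le (by norm_num : (0:ℝ) ≤ 1)] at hprim
    exact (continuousOn_const.add hprim).congr (hxk k)
  -- continuity of the limit
  have hxc : ContinuousOn x I := hconv.continuousOn (Eventually.of_forall hxkc).frequently
  -- continuity of the composed functions
  have hgk : ∀ k, ContinuousOn (fun s => f (xk k s) s) I := by
    intro k
    exact hf.comp ((hxkc k).prodMk continuousOn_id) fun s hs => ⟨trivial, hs⟩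
  have hgc : ContinuousOn (fun s => f (x s) s) I := by
    exact hf.comp (hxc.prodMk continuousOn_id) fun s hs => ⟨trivial, hs⟩
  -- continuity of the residuals
  have hbc : ∀ k, ContinuousOn (b k) I := by
    intro k
    exact ((hgk k).sub (hfk k)).congr (hb k)
  -- a compact set containing the relevant values
  have hK : IsCompact (x '' I) := isCompact_Icc.image_of_continuousOn hxc
  have hS : IsCompact (Metric.cthickening 1 (x '' I)) := hK.cthickening
  obtain ⟨C, hC⟩ := (hS.prod isCompact_Icc).exists_bound_of_continuousOn
    (hf.mono (Set.prod_mono (Set.subset_univ _) subset_rfl))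
  -- eventually xk k s lies in the thickening
  have hev : ∀ᶠ k in atTop, ∀ s ∈ I, xk k s ∈ Metric.cthickening 1 (x '' I) := by
    filter_upwards [Metric.tendstoUniformlyOn_iff.mp hconv 1 one_pos] with k hk s hs
    refine Metric.mem_cthickening_of_dist_le _ (x s) 1 _ ⟨s, hs, rfl⟩ ?_
    rw [dist_comm]
    exact (hk s hs).le
  -- key identity
  have key : ∀ t ∈ I, x t = θ₀ + ∫ s in (0:ℝ)..t, f (x s) s := by
    intro t ht
    have htI : Set.uIoc (0 : ℝ) t ⊆ I := by
      rw [Set.uIoc_of_le ht.1]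
      exact (Set.Ioc_subset_Icc_self).trans (Set.Icc_subset_Icc le_rfl ht.2)
    have htIcc : Set.uIcc (0 : ℝ) t ⊆ I := by
      rw [Set.uIcc_of_le ht.1]
      exact Set.Icc_subset_Icc le_rfl ht.2
    -- split the integral
    have hsplit : ∀ k, xk k t =
        θ₀ + ((∫ s in (0:ℝ)..t, f (xk k s) s) - ∫ s in (0:ℝ)..t, b k s) := by
      intro k
      rw [hxk k t ht]
      congr 1
      have h1 : IntervalIntegrable (fun s => f (xk k s) s) volume 0 t :=
        ((hgk k).mono htIcc).intervalIntegrable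
      have h2 : IntervalIntegrable (b k) volume 0 t :=
        ((hbc k).mono htIcc).intervalIntegrable
      rw [← intervalIntegral.integral_sub h1 h2]
      apply intervalIntegral.integral_congr
      intro s hs
      have hsI : s ∈ I := htIcc hs
      show fk k s = f (xk k s) s - b k s
      rw [hb k s hsI]
      abel
    -- convergence of the first integral
    have h2 : Tendsto (fun k => ∫ s in (0:ℝ)..t, f (xk k s) s) atTop
        (nhds (∫ s in (0:ℝ)..t, f (x s) s)) := by
      refine aux_dct (fun k s => f (xk k s) s) (fun s => f (x s) s) t C
        ?_ ?_ ?_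
      · exact Eventually.of_forall fun k =>
          (((hgk k).mono htI).aestronglyMeasurable measurableSet_uIoc)
      · filter_upwards [hev] with k hk
        exact fun s hs => hC (xk k s, s) ⟨hk s (htI hs), htI hs⟩
      · refine Eventually.of_forall fun s hs => ?_
        have hsI : s ∈ I := htI hs
        have hx : Tendsto (fun k => xk k s) atTop (nhds (x s)) :=
          hconv.tendsto_at hsI
        have hp : Tendsto (fun k => (xk k s, s)) atTop
            (nhdsWithin (x s, s) (Set.univ ×ˢ I)) := by
          rw [tendsto_nhdsWithin_iff]
          exact ⟨hx.prodMk_nhds tendsto_const_nhds,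
            Eventually.of_forall fun k => ⟨trivial, hsI⟩⟩
        exact (hf (x s, s) ⟨trivial, hsI⟩).tendsto.comp hp
    have h3 : Tendsto (fun k => ∫ s in (0:ℝ)..t, b k s) atTop (nhds 0) := by
      have h0 : (0 : EuclideanSpace ℝ (Fin n)) =
          ∫ s in (0:ℝ)..t, (fun _ => (0 : EuclideanSpace ℝ (Fin n))) s := by simp
      rw [h0]
      refine aux_dct (fun k => b k) (fun _ => 0) t M ?_ ?_ ?_
      · exact Eventually.of_forall fun k =>
          ((hbc k).mono htI).aestronglyMeasurable measurableSet_uIoc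
      · exact Eventually.of_forall fun k s hs => hbd k s (htI hs)
      · have := (ae_restrict_iff' measurableSet_Icc).mp hres
        filter_upwards [this] with s hs hsI
        exact hs (htI hsI)
    have h1 : Tendsto (fun k => xk k t) atTop (nhds (x t)) := hconv.tendsto_at ht
    have h4 : Tendsto (fun k => xk k t) atTop
        (nhds (θ₀ + ((∫ s in (0:ℝ)..t, f (x s) s) - 0))) := by
      simp only [hsplit]
      exact tendsto_const_nhds.add (h2.sub h3)
    have := tendsto_nhds_unique h1 h4
    simpa using this
  refine ⟨key, ?_⟩
  intro t ht
  have hIccnhds : I ∈ nhds t := Icc_mem_nhds ht.1 ht.2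
  have htIcc : Set.uIcc (0 : ℝ) t ⊆ I := by
    rw [Set.uIcc_of_le ht.1.le]
    exact Set.Icc_subset_Icc le_rfl ht.2.le
  have hd : HasDerivAt (fun u => θ₀ + ∫ s in (0:ℝ)..u, f (x s) s) (f (x t) t) t := by
    refine HasDerivAt.const_add θ₀ ?_
    exact intervalIntegral.integral_hasDerivAt_right
      ((hgc.mono htIcc).intervalIntegrable)
      ⟨I, hIccnhds, hgc.aestronglyMeasurable measurableSet_Icc⟩
      (hgc.continuousAt hIccnhds)
  refine hd.congr_of_eventuallyEq ?_
  filter_upwards [hIccnhds] with u hu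
  exact key u hu
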